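/- Let μ* be a global minimizer of F over ℝ^m and let μ̲ ≤ μ̄ be reals with μ̲ ≤ μ*_j ≤ μ̄ for all j. Let δ > 0 and η > 0 satisfy 2δ·log(m+1)·‖B‖₁ ≤ exp(μ̲ − η)·η². Then for every μ ∈ ℝ^m with μ̲ − η ≤ μ_j ≤ μ̄ + η for all j, one has F_δ(μ) − inf_{ν∈ℝ^m} F_δ(ν) ≤ ‖∇F_δ(μ)‖₂² / (2·exp(μ̲ − η)). -/
import Mathlib


open scoped Classical

noncomputable section

/-- Extended valuation vector of buyer `i`: index `0` gets value `1` (the convention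
`v_{i0} = 1`), index `j+1` gets `v i j`. -/
def extV {n m : ℕ} (v : Fin n → Fin m → ℝ) (i : Fin n) : Fin (m + 1) → ℝ :=
  Fin.cons 1 (v i)

/-- Extended log-price vector: index `0` gets `0` (the convention `μ₀ = 0`),
index `j+1` gets `μ j`. -/
def extMu {m : ℕ} (μ : Fin m → ℝ) : Fin (m + 1) → ℝ :=
  Fin.cons 0 μ

/-- The smoothed weight `exp((log v_{ij} − μ_j)/δ) = v_{ij}^{1/δ} · exp(−μ_j/δ)`,
with the conventions `log 0 = −∞`, `exp (−∞) = 0` (via `0 ^ (1/δ) = 0` for `δ > 0`). -/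
def wt {n m : ℕ} (v : Fin n → Fin m → ℝ) (δ : ℝ) (μ : Fin m → ℝ) (i : Fin n)
    (j : Fin (m + 1)) : ℝ :=
  extV v i j ^ (1 / δ) * Real.exp (-extMu μ j / δ)

/-- The smoothed objective `F_δ`. -/
def Fd {n m : ℕ} (B : Fin n → ℝ) (v : Fin n → Fin m → ℝ) (δ : ℝ) (μ : Fin m → ℝ) : ℝ :=
  (∑ j, Real.exp (μ j)) + δ * ∑ i, B i * Real.log (∑ j, wt v δ μ i j)

/-- The gradient of the smoothed objective `F_δ`. -/
def gradFd {n m : ℕ} (B : Fin n → ℝ) (v : Fin n → Fin m → ℝ) (δ : ℝ) (μ : Fin m → ℝ)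
    (j : Fin m) : ℝ :=
  Real.exp (μ j) - ∑ i, B i * (wt v δ μ i j.succ / ∑ j', wt v δ μ i j')

/-- The value `v_{ij} · exp(−μ_j)` (over extended indices), whose logarithm is
`log v_{ij} − μ_j` with the convention `log 0 = −∞`. -/
def valF {n m : ℕ} (v : Fin n → Fin m → ℝ) (μ : Fin m → ℝ) (i : Fin n) (j : Fin (m + 1)) : ℝ :=
  extV v i j * Real.exp (-extMu μ j)

/-- `h_i(μ) = max_{j ∈ {0,…,m}} (log v_{ij} − μ_j)`, realized as the logarithm of the
(positive) maximum of the values `v_{ij} e^{−μ_j}`. -/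
def hMax {n m : ℕ} (v : Fin n → Fin m → ℝ) (μ : Fin m → ℝ) (i : Fin n) : ℝ :=
  Real.log (Finset.univ.sup' Finset.univ_nonempty (valF v μ i))

/-- The nonsmooth objective `F`. -/
def Fobj {n m : ℕ} (B : Fin n → ℝ) (v : Fin n → Fin m → ℝ) (μ : Fin m → ℝ) : ℝ :=
  (∑ j, Real.exp (μ j)) + ∑ i, B i * hMax v μ i

/-- The active index set `𝒥_i(μ) = {j ∈ {0,…,m} : log v_{ij} − μ_j = h_i(μ)}`. -/
def activeSet {n m : ℕ} (v : Fin n → Fin m → ℝ) (μ : Fin m → ℝ) (i : Fin n) :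
    Finset (Fin (m + 1)) :=
  Finset.univ.filter fun j =>
    valF v μ i j = Finset.univ.sup' Finset.univ_nonempty (valF v μ i)

/-- The Euclidean norm on `ℝ^m`. -/
def enorm2 {m : ℕ} (x : Fin m → ℝ) : ℝ :=
  Real.sqrt (∑ j, x j ^ 2)

end


noncomputable section Aux

lemma mono_from_deriv (f f' : ℝ → ℝ) (hd : ∀ x, HasDerivAt f (f' x) x)
    (h0 : ∀ x, 0 ≤ x → 0 ≤ f' x) {x : ℝ} (hx : 0 ≤ x) : f 0 ≤ f x := by
  have hmono : MonotoneOn f (Set.Ici (0:ℝ)) := by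
    apply monotoneOn_of_deriv_nonneg (convex_Ici 0)
    · exact fun y _ => (hd y).differentiableAt.continuousAt.continuousWithinAt
    · exact fun y _ => (hd y).differentiableAt.differentiableWithinAt
    · intro y hy
      rw [interior_Ici] at hy
      rw [(hd y).deriv]
      exact h0 y (le_of_lt hy)
  exact hmono (by simp) hx hx

lemma aux_one_sub (x : ℝ) (hx : 0 ≤ x) : (1 - x) * Real.exp x + x ^ 2 / 2 ≤ 1 := by
  have h := mono_from_deriv (fun x => 1 - ((1 - x) * Real.exp x + x ^ 2 / 2))
    (fun x => x * Real.exp x - x) (fun y => ?_) (fun y hy => ?_) hx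
  · simp at h; nlinarith [h]
  · have h1 : HasDerivAt (fun x : ℝ => (1 - x) * Real.exp x)
        ((-1) * Real.exp y + (1 - y) * Real.exp y) y :=
      (HasDerivAt.const_sub 1 (hasDerivAt_id y)).mul (Real.hasDerivAt_exp y)
    have h2 : HasDerivAt (fun x : ℝ => x ^ 2 / 2) (y) y := by
      simpa using ((hasDerivAt_pow 2 y).div_const 2)
    have h3 := (h1.add h2).const_sub 1
    show HasDerivAt _ (y * Real.exp y - y) y
    have : y * Real.exp y - y = -(-1 * Real.exp y + (1 - y) * Real.exp y + y) := by ring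
    rw [this]
    exact h3
  · show 0 ≤ y * Real.exp y - y
    nlinarith [Real.add_one_le_exp y, Real.exp_pos y]

lemma exp_quad_lower (L a b : ℝ) (ha : L ≤ a) (hb : L ≤ b) :
    Real.exp a + Real.exp a * (b - a) + Real.exp L / 2 * (b - a) ^ 2 ≤ Real.exp b := by
  rcases le_total a b with h | h
  · have h1 : 1 + (b - a) + (b - a) ^ 2 / 2 ≤ Real.exp (b - a) :=
      Real.quadratic_le_exp_of_nonneg (by linarith)
    have h2 : Real.exp L ≤ Real.exp a := Real.exp_le_exp.2 ha
    have h3 : Real.exp b = Real.exp a * Real.exp (b - a) := by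
      rw [← Real.exp_add]; ring_nf
    nlinarith [Real.exp_pos a, sq_nonneg (b - a)]
  · -- a ≥ b ≥ L. x = a - b ≥ 0
    have hx : 0 ≤ a - b := by linarith
    have key : (1 - (a - b)) * Real.exp (a - b) + (a - b) ^ 2 / 2 ≤ 1 := aux_one_sub _ hx
    have h2 : Real.exp L ≤ Real.exp b := Real.exp_le_exp.2 hb
    have h3 : Real.exp a = Real.exp b * Real.exp (a - b) := by
      rw [← Real.exp_add]; ring_nf
    nlinarith [Real.exp_pos b, sq_nonneg (a - b)]

lemma exp_strong_combo (L a b t : ℝ) (ha : L ≤ a) (hb : L ≤ b) (ht0 : 0 ≤ t) (ht1 : t ≤ 1) :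
    Real.exp ((1 - t) * a + t * b) + Real.exp L / 2 * (t * (1 - t)) * (a - b) ^ 2 ≤
      (1 - t) * Real.exp a + t * Real.exp b := by
  set c := (1 - t) * a + t * b with hc
  have hcL : L ≤ c := by nlinarith
  have h1 := exp_quad_lower L c a hcL ha
  have h2 := exp_quad_lower L c b hcL hb
  have e1 : a - c = t * (a - b) := by rw [hc]; ring
  have e2 : b - c = -(1 - t) * (a - b) := by rw [hc]; ring
  nlinarith [mul_le_mul_of_nonneg_left h1 (by linarith : (0:ℝ) ≤ 1 - t),
    mul_le_mul_of_nonneg_left h2 ht0, Real.exp_pos L, sq_nonneg (a-b)]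

end Aux

noncomputable section Aux2
open Real Finset

variable {n m : ℕ} {B : Fin n → ℝ} {v : Fin n → Fin m → ℝ} {δ : ℝ}

lemma extV_nonneg (hv : ∀ i j, 0 ≤ v i j) (i : Fin n) (j : Fin (m+1)) : 0 ≤ extV v i j := by
  induction j using Fin.cases with
  | zero => simp [extV]
  | succ j => simpa [extV] using hv i j

lemma wt_nonneg (hv : ∀ i j, 0 ≤ v i j) (μ : Fin m → ℝ) (i : Fin n) (j : Fin (m+1)) :
    0 ≤ wt v δ μ i j :=
  mul_nonneg (Real.rpow_nonneg (extV_nonneg hv i j) _) (Real.exp_nonneg _)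

lemma wt_zero (μ : Fin m → ℝ) (i : Fin n) : wt v δ μ i 0 = 1 := by
  simp [wt, extV, extMu]

lemma S_pos (hv : ∀ i j, 0 ≤ v i j) (μ : Fin m → ℝ) (i : Fin n) :
    0 < ∑ j, wt v δ μ i j := by
  have h1 : (1:ℝ) ≤ ∑ j, wt v δ μ i j := by
    rw [← wt_zero (v := v) (δ := δ) μ i]
    exact Finset.single_le_sum (fun j _ => wt_nonneg hv μ i j) (Finset.mem_univ 0)
  linarith

lemma valF_nonneg (hv : ∀ i j, 0 ≤ v i j) (μ : Fin m → ℝ) (i : Fin n) (j : Fin (m+1)) :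
    0 ≤ valF v μ i j :=
  mul_nonneg (extV_nonneg hv i j) (Real.exp_nonneg _)

lemma valF_zero (μ : Fin m → ℝ) (i : Fin n) : valF v μ i 0 = 1 := by
  simp [valF, extV, extMu]

lemma supValF_pos (μ : Fin m → ℝ) (i : Fin n) :
    0 < Finset.univ.sup' Finset.univ_nonempty (valF v μ i) := by
  have h := Finset.le_sup' (valF v μ i) (Finset.mem_univ 0)
  rw [valF_zero] at h
  linarith

lemma wt_eq_valF (hv : ∀ i j, 0 ≤ v i j) (hδ : 0 < δ) (μ : Fin m → ℝ) (i : Fin n)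
    (j : Fin (m+1)) : wt v δ μ i j = valF v μ i j ^ (1/δ) := by
  rw [valF, Real.mul_rpow (extV_nonneg hv i j) (Real.exp_nonneg _), wt]
  congr 1
  rw [← Real.exp_mul]
  congr 1
  ring

end Aux2
noncomputable section Aux3
open Real Finset

variable {n m : ℕ} {B : Fin n → ℝ} {v : Fin n → Fin m → ℝ} {δ : ℝ}

lemma buyer_lower (hv : ∀ i j, 0 ≤ v i j) (hδ : 0 < δ) (μ : Fin m → ℝ) (i : Fin n) :
    hMax v μ i ≤ δ * Real.log (∑ j, wt v δ μ i j) := by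
  set M := Finset.univ.sup' Finset.univ_nonempty (valF v μ i) with hM
  have hMpos : 0 < M := supValF_pos μ i
  obtain ⟨j0, _, hj0⟩ := Finset.exists_mem_eq_sup' Finset.univ_nonempty (valF v μ i)
  have h1 : M ^ (1/δ) ≤ ∑ j, wt v δ μ i j := by
    rw [hM, hj0, ← wt_eq_valF hv hδ]
    exact Finset.single_le_sum (fun j _ => wt_nonneg hv μ i j) (Finset.mem_univ j0)
  have h2 : Real.log (M ^ (1/δ)) ≤ Real.log (∑ j, wt v δ μ i j) :=
    (Real.log_le_log_iff (Real.rpow_pos_of_pos hMpos _) (S_pos hv μ i)).2 h1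
  rw [Real.log_rpow hMpos] at h2
  have : hMax v μ i = Real.log M := rfl
  rw [this]
  calc Real.log M = δ * (1/δ * Real.log M) := by field_simp
    _ ≤ δ * Real.log (∑ j, wt v δ μ i j) := by
        exact mul_le_mul_of_nonneg_left h2 hδ.le

lemma buyer_upper (hv : ∀ i j, 0 ≤ v i j) (hδ : 0 < δ) (μ : Fin m → ℝ) (i : Fin n) :
    δ * Real.log (∑ j, wt v δ μ i j) ≤ hMax v μ i + δ * Real.log (m + 1) := by
  set M := Finset.univ.sup' Finset.univ_nonempty (valF v μ i) with hM
  have hMpos : 0 < M := supValF_pos μ i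
  have h1 : ∑ j, wt v δ μ i j ≤ (m + 1 : ℝ) * M ^ (1/δ) := by
    calc ∑ j, wt v δ μ i j ≤ ∑ _j : Fin (m+1), M ^ (1/δ) := by
          apply Finset.sum_le_sum
          intro j _
          rw [wt_eq_valF hv hδ]
          exact Real.rpow_le_rpow (valF_nonneg hv μ i j)
            (Finset.le_sup' (valF v μ i) (Finset.mem_univ j)) (by positivity)
      _ = (m + 1 : ℝ) * M ^ (1/δ) := by
          rw [Finset.sum_const, Finset.card_univ, Fintype.card_fin]
          push_cast; ring
  have h2 : Real.log (∑ j, wt v δ μ i j) ≤ Real.log ((m + 1 : ℝ) * M ^ (1/δ)) :=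
    (Real.log_le_log_iff (S_pos hv μ i)
      (by positivity)).2 h1
  rw [Real.log_mul (by positivity) (by positivity), Real.log_rpow hMpos] at h2
  have hh : hMax v μ i = Real.log M := rfl
  rw [hh]
  have := mul_le_mul_of_nonneg_left h2 hδ.le
  calc δ * Real.log (∑ j, wt v δ μ i j)
      ≤ δ * (Real.log (m+1) + 1/δ * Real.log M) := this
    _ = Real.log M + δ * Real.log (m+1) := by field_simp; ring

lemma fobj_le_fd (hv : ∀ i j, 0 ≤ v i j) (hB : ∀ i, 0 < B i) (hδ : 0 < δ) (μ : Fin m → ℝ) :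
    Fobj B v μ ≤ Fd B v δ μ := by
  unfold Fobj Fd
  have : ∑ i, B i * hMax v μ i ≤ ∑ i, B i * (δ * Real.log (∑ j, wt v δ μ i j)) := by
    apply Finset.sum_le_sum
    exact fun i _ => mul_le_mul_of_nonneg_left (buyer_lower hv hδ μ i) (hB i).le
  have e1 : δ * ∑ i, B i * Real.log (∑ j, wt v δ μ i j)
      = ∑ i, B i * (δ * Real.log (∑ j, wt v δ μ i j)) := by
    rw [Finset.mul_sum]; apply Finset.sum_congr rfl; intro i _; ring
  rw [e1]
  linarith

lemma fd_le_fobj_gap (hv : ∀ i j, 0 ≤ v i j) (hB : ∀ i, 0 < B i) (hδ : 0 < δ) (μ : Fin m → ℝ) :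
    Fd B v δ μ ≤ Fobj B v μ + δ * Real.log (m + 1) * ∑ i, B i := by
  unfold Fobj Fd
  have h : ∑ i, B i * (δ * Real.log (∑ j, wt v δ μ i j)) ≤
      ∑ i, B i * (hMax v μ i + δ * Real.log (m + 1)) := by
    apply Finset.sum_le_sum
    exact fun i _ => mul_le_mul_of_nonneg_left (buyer_upper hv hδ μ i) (hB i).le
  have e1 : δ * ∑ i, B i * Real.log (∑ j, wt v δ μ i j)
      = ∑ i, B i * (δ * Real.log (∑ j, wt v δ μ i j)) := by
    rw [Finset.mul_sum]; apply Finset.sum_congr rfl; intro i _; ring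
  have e2 : ∑ i, B i * (hMax v μ i + δ * Real.log (m + 1))
      = (∑ i, B i * hMax v μ i) + δ * Real.log (m+1) * ∑ i, B i := by
    rw [Finset.mul_sum, ← Finset.sum_add_distrib]
    apply Finset.sum_congr rfl; intro i _; ring
  rw [e1]
  linarith [h, e2 ▸ h]

end Aux3
noncomputable section Aux4
open Real Finset

variable {n m : ℕ} {B : Fin n → ℝ} {v : Fin n → Fin m → ℝ} {δ : ℝ}

lemma jensen_step (hv : ∀ i j, 0 ≤ v i j) (hδ : 0 < δ) (μ ν : Fin m → ℝ) (i : Fin n) :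
    δ * Real.log (∑ j, wt v δ μ i j)
      - ∑ j : Fin m, (wt v δ μ i j.succ / ∑ j', wt v δ μ i j') * (ν j - μ j)
      ≤ δ * Real.log (∑ j, wt v δ ν i j) := by
  set S : ℝ := ∑ j, wt v δ μ i j with hSdef
  have hS : 0 < S := S_pos hv μ i
  set x : Fin (m+1) → ℝ := fun j => (extMu μ j - extMu ν j) / δ with hx
  have hwt : ∀ j, wt v δ ν i j = wt v δ μ i j * Real.exp (x j) := by
    intro j
    unfold wt
    rw [mul_assoc, ← Real.exp_add]
    congr 2
    rw [hx]
    ring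
  set xb : ℝ := (∑ j, wt v δ μ i j * x j) / S with hxb
  have hsum : ∑ j, wt v δ μ i j * x j = xb * S := by
    rw [hxb]; field_simp
  have key : S * Real.exp xb ≤ ∑ j, wt v δ ν i j := by
    have h1 : ∀ j : Fin (m+1), wt v δ μ i j * (Real.exp xb * (1 + (x j - xb)))
        ≤ wt v δ ν i j := by
      intro j
      rw [hwt j]
      apply mul_le_mul_of_nonneg_left _ (wt_nonneg hv μ i j)
      have h2 : Real.exp (x j) = Real.exp xb * Real.exp (x j - xb) := by
        rw [← Real.exp_add]; congr 1; ring
      rw [h2]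
      apply mul_le_mul_of_nonneg_left _ (Real.exp_nonneg _)
      linarith [Real.add_one_le_exp (x j - xb)]
    have h3 : ∑ j, wt v δ μ i j * (Real.exp xb * (1 + (x j - xb)))
        ≤ ∑ j, wt v δ ν i j := Finset.sum_le_sum (fun j _ => h1 j)
    have h4 : ∑ j, wt v δ μ i j * (Real.exp xb * (1 + (x j - xb)))
        = Real.exp xb * (S + (∑ j, wt v δ μ i j * x j) - xb * S) := by
      calc ∑ j, wt v δ μ i j * (Real.exp xb * (1 + (x j - xb)))
          = ∑ j, (Real.exp xb * wt v δ μ i j + Real.exp xb * (wt v δ μ i j * x j)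
              - (Real.exp xb * xb) * wt v δ μ i j) := by
            apply Finset.sum_congr rfl; intro j _; ring
        _ = Real.exp xb * (∑ j, wt v δ μ i j) + Real.exp xb * (∑ j, wt v δ μ i j * x j)
              - (Real.exp xb * xb) * ∑ j, wt v δ μ i j := by
            rw [Finset.sum_sub_distrib, Finset.sum_add_distrib, ← Finset.mul_sum,
              ← Finset.mul_sum, ← Finset.mul_sum]
        _ = Real.exp xb * (S + (∑ j, wt v δ μ i j * x j) - xb * S) := by
            rw [← hSdef]; ring
    rw [h4, hsum] at h3
    calc S * Real.exp xb = Real.exp xb * (S + xb * S - xb * S) := by ring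
      _ ≤ ∑ j, wt v δ ν i j := h3
  have hlog : Real.log S + xb ≤ Real.log (∑ j, wt v δ ν i j) := by
    have := (Real.log_le_log_iff (by positivity) (S_pos hv ν i)).2 key
    rwa [Real.log_mul hS.ne' (Real.exp_pos _).ne', Real.log_exp] at this
  have hxbeq : δ * xb = - ∑ j : Fin m, (wt v δ μ i j.succ / S) * (ν j - μ j) := by
    rw [hxb]
    rw [show (∑ j, wt v δ μ i j * x j) = ∑ j : Fin m, wt v δ μ i j.succ * (μ j - ν j) / δ by
      rw [Fin.sum_univ_succ]
      have h0 : wt v δ μ i 0 * x 0 = 0 := by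
        simp [hx, extMu]
      rw [h0, zero_add]
      apply Finset.sum_congr rfl
      intro j _
      simp only [hx, extMu, Fin.cons_succ]
      ring]
    rw [Finset.sum_div, Finset.mul_sum, ← Finset.sum_neg_distrib]
    apply Finset.sum_congr rfl
    intro j _
    field_simp
    ring
  nlinarith [mul_le_mul_of_nonneg_left hlog hδ.le]

end Aux4
noncomputable section Aux5
open Real Finset

variable {n m : ℕ} {B : Fin n → ℝ} {v : Fin n → Fin m → ℝ} {δ : ℝ}

lemma fd_rewrite (B : Fin n → ℝ) (v : Fin n → Fin m → ℝ) (δ : ℝ) (μ : Fin m → ℝ) :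
    Fd B v δ μ = (∑ j, Real.exp (μ j))
      + ∑ i, B i * (δ * Real.log (∑ j, wt v δ μ i j)) := by
  unfold Fd
  congr 1
  rw [Finset.mul_sum]
  apply Finset.sum_congr rfl
  intro i _
  ring

lemma star_ineq (hv : ∀ i j, 0 ≤ v i j) (hB : ∀ i, 0 < B i) (hδ : 0 < δ) (L : ℝ)
    (μ ν : Fin m → ℝ) (hμL : ∀ j, L ≤ μ j) (hνL : ∀ j, L ≤ ν j) :
    Fd B v δ μ + (∑ j, gradFd B v δ μ j * (ν j - μ j))
      + Real.exp L / 2 * ∑ j, (ν j - μ j) ^ 2 ≤ Fd B v δ ν := by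
  have hA : ∑ j, (Real.exp (μ j) + Real.exp (μ j) * (ν j - μ j)
      + Real.exp L / 2 * (ν j - μ j) ^ 2) ≤ ∑ j, Real.exp (ν j) :=
    Finset.sum_le_sum (fun j _ => exp_quad_lower L (μ j) (ν j) (hμL j) (hνL j))
  have hA' : (∑ j, Real.exp (μ j)) + (∑ j, Real.exp (μ j) * (ν j - μ j))
      + Real.exp L / 2 * ∑ j, (ν j - μ j) ^ 2 ≤ ∑ j, Real.exp (ν j) := by
    rw [Finset.sum_add_distrib, Finset.sum_add_distrib] at hA
    rw [Finset.mul_sum]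
    linarith
  have hC : (∑ i, B i * (δ * Real.log (∑ j, wt v δ μ i j)))
      - ∑ i, B i * ∑ j : Fin m, (wt v δ μ i j.succ / ∑ j', wt v δ μ i j') * (ν j - μ j)
      ≤ ∑ i, B i * (δ * Real.log (∑ j, wt v δ ν i j)) := by
    rw [← Finset.sum_sub_distrib]
    apply Finset.sum_le_sum
    intro i _
    have h1 := jensen_step hv hδ μ ν i
    calc B i * (δ * Real.log (∑ j, wt v δ μ i j))
          - B i * ∑ j : Fin m, (wt v δ μ i j.succ / ∑ j', wt v δ μ i j') * (ν j - μ j)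
        = B i * (δ * Real.log (∑ j, wt v δ μ i j)
          - ∑ j : Fin m, (wt v δ μ i j.succ / ∑ j', wt v δ μ i j') * (ν j - μ j)) := by ring
      _ ≤ B i * (δ * Real.log (∑ j, wt v δ ν i j)) :=
        mul_le_mul_of_nonneg_left h1 (hB i).le
  have hswap : ∑ i, B i * ∑ j : Fin m, (wt v δ μ i j.succ / ∑ j', wt v δ μ i j') * (ν j - μ j)
      = ∑ j : Fin m, (∑ i, B i * (wt v δ μ i j.succ / ∑ j', wt v δ μ i j')) * (ν j - μ j) := by
    simp_rw [Finset.mul_sum, Finset.sum_mul, ← mul_assoc]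
    exact Finset.sum_comm
  have hg : ∑ j, gradFd B v δ μ j * (ν j - μ j)
      = (∑ j, Real.exp (μ j) * (ν j - μ j))
        - ∑ i, B i * ∑ j : Fin m, (wt v δ μ i j.succ / ∑ j', wt v δ μ i j') * (ν j - μ j) := by
    rw [hswap, ← Finset.sum_sub_distrib]
    apply Finset.sum_congr rfl
    intro j _
    simp only [gradFd, sub_mul, Finset.sum_mul]
  rw [fd_rewrite B v δ μ, fd_rewrite B v δ ν, hg]
  linarith

end Aux5
noncomputable section Aux6
open Real Finset

variable {n m : ℕ} {B : Fin n → ℝ} {v : Fin n → Fin m → ℝ} {δ : ℝ}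

lemma extMu_combo (t : ℝ) (x y : Fin m → ℝ) (j : Fin (m+1)) :
    extMu (fun j => (1 - t) * x j + t * y j) j = (1 - t) * extMu x j + t * extMu y j := by
  induction j using Fin.cases with
  | zero => simp [extMu]
  | succ j => simp [extMu]

lemma hMax_combo (hv : ∀ i j, 0 ≤ v i j) {t : ℝ} (ht0 : 0 ≤ t) (ht1 : t ≤ 1)
    (x y : Fin m → ℝ) (i : Fin n) :
    hMax v (fun j => (1 - t) * x j + t * y j) i ≤ (1 - t) * hMax v x i + t * hMax v y i := by
  set Sx := Finset.univ.sup' Finset.univ_nonempty (valF v x i) with hSx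
  set Sy := Finset.univ.sup' Finset.univ_nonempty (valF v y i) with hSy
  have hSxp : 0 < Sx := supValF_pos x i
  have hSyp : 0 < Sy := supValF_pos y i
  have hle : Finset.univ.sup' Finset.univ_nonempty (valF v (fun j => (1 - t) * x j + t * y j) i)
      ≤ Sx ^ (1 - t) * Sy ^ t := by
    apply Finset.sup'_le
    intro j _
    have hexp : Real.exp (-extMu (fun j => (1 - t) * x j + t * y j) j)
        = Real.exp (-extMu x j) ^ (1 - t) * Real.exp (-extMu y j) ^ t := by
      rw [extMu_combo, ← Real.exp_mul, ← Real.exp_mul, ← Real.exp_add]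
      congr 1
      ring
    rcases eq_or_lt_of_le (extV_nonneg hv i j) with h0 | hpos
    · have : valF v (fun j => (1 - t) * x j + t * y j) i j = 0 := by
        rw [valF, ← h0, zero_mul]
      rw [this]
      positivity
    · have hV : extV v i j = extV v i j ^ (1 - t) * extV v i j ^ t := by
        rw [← Real.rpow_add hpos]
        norm_num
      have heq : valF v (fun j => (1 - t) * x j + t * y j) i j
          = valF v x i j ^ (1 - t) * valF v y i j ^ t := by
        rw [valF, hexp, valF, valF, Real.mul_rpow (extV_nonneg hv i j) (Real.exp_nonneg _),
          Real.mul_rpow (extV_nonneg hv i j) (Real.exp_nonneg _)]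
        calc extV v i j * (Real.exp (-extMu x j) ^ (1 - t) * Real.exp (-extMu y j) ^ t)
            = (extV v i j ^ (1 - t) * extV v i j ^ t)
              * (Real.exp (-extMu x j) ^ (1 - t) * Real.exp (-extMu y j) ^ t) := by
              rw [← hV]
          _ = extV v i j ^ (1 - t) * Real.exp (-extMu x j) ^ (1 - t)
              * (extV v i j ^ t * Real.exp (-extMu y j) ^ t) := by ring
      rw [heq]
      have h1 : valF v x i j ^ (1 - t) ≤ Sx ^ (1 - t) :=
        Real.rpow_le_rpow (valF_nonneg hv x i j)
          (Finset.le_sup' (valF v x i) (Finset.mem_univ j)) (by linarith)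
      have h2 : valF v y i j ^ t ≤ Sy ^ t :=
        Real.rpow_le_rpow (valF_nonneg hv y i j)
          (Finset.le_sup' (valF v y i) (Finset.mem_univ j)) ht0
      exact mul_le_mul h1 h2 (Real.rpow_nonneg (valF_nonneg hv y i j) _)
        (Real.rpow_nonneg hSxp.le _)
  have hpos2 : 0 < Sx ^ (1 - t) * Sy ^ t :=
    mul_pos (Real.rpow_pos_of_pos hSxp _) (Real.rpow_pos_of_pos hSyp _)
  have hlog := (Real.log_le_log_iff (supValF_pos _ i) hpos2).2 hle
  rw [Real.log_mul (Real.rpow_pos_of_pos hSxp _).ne' (Real.rpow_pos_of_pos hSyp _).ne',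
    Real.log_rpow hSxp, Real.log_rpow hSyp] at hlog
  exact hlog

end Aux6
noncomputable section Aux7
open Real Finset

variable {n m : ℕ} {B : Fin n → ℝ} {v : Fin n → Fin m → ℝ} {δ : ℝ}

lemma exp_combo (a b t : ℝ) (ht0 : 0 ≤ t) (ht1 : t ≤ 1) :
    Real.exp ((1 - t) * a + t * b) ≤ (1 - t) * Real.exp a + t * Real.exp b := by
  have := convexOn_exp.2 (Set.mem_univ a) (Set.mem_univ b) (by linarith : (0:ℝ) ≤ 1 - t) ht0
    (by ring)
  simpa using this

lemma fobj_combo (hv : ∀ i j, 0 ≤ v i j) (hB : ∀ i, 0 < B i) {t : ℝ}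
    (ht0 : 0 ≤ t) (ht1 : t ≤ 1) (x y : Fin m → ℝ) :
    Fobj B v (fun j => (1 - t) * x j + t * y j) ≤ (1 - t) * Fobj B v x + t * Fobj B v y := by
  unfold Fobj
  have hA : ∑ j, Real.exp ((1 - t) * x j + t * y j)
      ≤ (1 - t) * ∑ j, Real.exp (x j) + t * ∑ j, Real.exp (y j) := by
    rw [Finset.mul_sum, Finset.mul_sum, ← Finset.sum_add_distrib]
    exact Finset.sum_le_sum fun j _ => exp_combo (x j) (y j) t ht0 ht1
  have hM : ∑ i, B i * hMax v (fun j => (1 - t) * x j + t * y j) i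
      ≤ (1 - t) * ∑ i, B i * hMax v x i + t * ∑ i, B i * hMax v y i := by
    rw [Finset.mul_sum, Finset.mul_sum, ← Finset.sum_add_distrib]
    apply Finset.sum_le_sum
    intro i _
    calc B i * hMax v (fun j => (1 - t) * x j + t * y j) i
        ≤ B i * ((1 - t) * hMax v x i + t * hMax v y i) :=
          mul_le_mul_of_nonneg_left (hMax_combo hv ht0 ht1 x y i) (hB i).le
      _ = (1 - t) * (B i * hMax v x i) + t * (B i * hMax v y i) := by ring
  calc (∑ j, Real.exp ((1 - t) * x j + t * y j))
        + ∑ i, B i * hMax v (fun j => (1 - t) * x j + t * y j) i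
      ≤ ((1 - t) * ∑ j, Real.exp (x j) + t * ∑ j, Real.exp (y j))
        + ((1 - t) * ∑ i, B i * hMax v x i + t * ∑ i, B i * hMax v y i) := by linarith
    _ = (1 - t) * ((∑ j, Real.exp (x j)) + ∑ i, B i * hMax v x i)
        + t * ((∑ j, Real.exp (y j)) + ∑ i, B i * hMax v y i) := by ring

lemma fobj_strong_combo (hv : ∀ i j, 0 ≤ v i j) (hB : ∀ i, 0 < B i) (L : ℝ) {t : ℝ}
    (ht0 : 0 ≤ t) (ht1 : t ≤ 1) (x y : Fin m → ℝ)
    (hx : ∀ j, L ≤ x j) (hy : ∀ j, L ≤ y j) :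
    Fobj B v (fun j => (1 - t) * x j + t * y j)
      + Real.exp L / 2 * (t * (1 - t)) * ∑ j, (x j - y j) ^ 2
      ≤ (1 - t) * Fobj B v x + t * Fobj B v y := by
  unfold Fobj
  have hA : (∑ j, Real.exp ((1 - t) * x j + t * y j))
      + Real.exp L / 2 * (t * (1 - t)) * ∑ j, (x j - y j) ^ 2
      ≤ (1 - t) * ∑ j, Real.exp (x j) + t * ∑ j, Real.exp (y j) := by
    rw [Finset.mul_sum, Finset.mul_sum, Finset.mul_sum, ← Finset.sum_add_distrib,
      ← Finset.sum_add_distrib]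
    exact Finset.sum_le_sum fun j _ =>
      exp_strong_combo L (x j) (y j) t (hx j) (hy j) ht0 ht1
  have hM : ∑ i, B i * hMax v (fun j => (1 - t) * x j + t * y j) i
      ≤ (1 - t) * ∑ i, B i * hMax v x i + t * ∑ i, B i * hMax v y i := by
    rw [Finset.mul_sum, Finset.mul_sum, ← Finset.sum_add_distrib]
    apply Finset.sum_le_sum
    intro i _
    calc B i * hMax v (fun j => (1 - t) * x j + t * y j) i
        ≤ B i * ((1 - t) * hMax v x i + t * hMax v y i) :=
          mul_le_mul_of_nonneg_left (hMax_combo hv ht0 ht1 x y i) (hB i).le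
      _ = (1 - t) * (B i * hMax v x i) + t * (B i * hMax v y i) := by ring
  nlinarith [hA, hM]

end Aux7
noncomputable section Aux8
open Real Finset Filter

variable {n m : ℕ} {B : Fin n → ℝ} {v : Fin n → Fin m → ℝ} {δ : ℝ}

lemma fobj_growth (hv : ∀ i j, 0 ≤ v i j) (hB : ∀ i, 0 < B i) (L : ℝ) (μs : Fin m → ℝ)
    (hmin : ∀ ν, Fobj B v μs ≤ Fobj B v ν) (hμsL : ∀ j, L ≤ μs j)
    (σ : Fin m → ℝ) (hσL : ∀ j, L ≤ σ j) :
    Fobj B v μs + Real.exp L / 2 * ∑ j, (μs j - σ j) ^ 2 ≤ Fobj B v σ := by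
  set D := ∑ j, (μs j - σ j) ^ 2 with hD
  have key : ∀ t : ℝ, t ∈ Set.Ioo (0:ℝ) 1 →
      Real.exp L / 2 * (1 - t) * D ≤ Fobj B v σ - Fobj B v μs := by
    intro t ht
    have h1 := fobj_strong_combo hv hB L ht.1.le ht.2.le μs σ hμsL hσL
    have h2 := hmin (fun j => (1 - t) * μs j + t * σ j)
    have h3 : t * (Real.exp L / 2 * (1 - t) * D) ≤ t * (Fobj B v σ - Fobj B v μs) := by
      nlinarith [h1, h2]
    exact le_of_mul_le_mul_left h3 ht.1
  have htend : Tendsto (fun t : ℝ => Real.exp L / 2 * (1 - t) * D)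
      (nhdsWithin 0 (Set.Ioi 0)) (nhds (Real.exp L / 2 * (1 - 0) * D)) := by
    apply Filter.Tendsto.mono_left _ nhdsWithin_le_nhds
    exact ((continuous_const.mul (continuous_const.sub continuous_id)).mul
      continuous_const).tendsto 0
  have hev : ∀ᶠ t in nhdsWithin (0:ℝ) (Set.Ioi 0),
      (fun t : ℝ => Real.exp L / 2 * (1 - t) * D) t ≤ Fobj B v σ - Fobj B v μs := by
    filter_upwards [Ioo_mem_nhdsGT_of_mem (Set.mem_Ico.2 ⟨le_refl (0:ℝ), zero_lt_one⟩)]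
      with t ht
    exact key t ht
  have := le_of_tendsto htend hev
  simp only [sub_zero, mul_one] at this
  linarith

lemma quad_bound {E : ℝ} (hE : 0 < E) (g d : Fin m → ℝ) :
    -(∑ j, g j ^ 2) / (2 * E) ≤ (∑ j, g j * d j) + E / 2 * ∑ j, d j ^ 2 := by
  have h : ∀ j, 0 ≤ g j * d j + E / 2 * d j ^ 2 + g j ^ 2 / (2 * E) := by
    intro j
    have h1 : g j * d j + E / 2 * d j ^ 2 + g j ^ 2 / (2 * E)
        = (E * d j + g j) ^ 2 / (2 * E) := by
      field_simp
      ring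
    rw [h1]
    positivity
  have h2 : 0 ≤ ∑ j, (g j * d j + E / 2 * d j ^ 2 + g j ^ 2 / (2 * E)) :=
    Finset.sum_nonneg fun j _ => h j
  have h3 : ∑ j, (g j * d j + E / 2 * d j ^ 2 + g j ^ 2 / (2 * E))
      = (∑ j, g j * d j) + E / 2 * (∑ j, d j ^ 2) + (∑ j, g j ^ 2) / (2 * E) := by
    rw [Finset.sum_add_distrib, Finset.sum_add_distrib, ← Finset.mul_sum, ← Finset.sum_div]
  rw [h3] at h2
  rw [neg_div]
  linarith

end Aux8
/-- gradient-dominance (Polyak–Łojasiewicz) bound for `F_δ` on the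
relaxed box, with strong convexity modulus `exp(μ̲ − η)`. -/
theorem fdelta_gradient_dominance
    (n m : ℕ) (hn : 1 ≤ n) (hm : 1 ≤ m)
    (B : Fin n → ℝ) (hB : ∀ i, 0 < B i)
    (v : Fin n → Fin m → ℝ) (hv : ∀ i j, 0 ≤ v i j)
    (μs : Fin m → ℝ) (hμs : ∀ ν : Fin m → ℝ, Fobj B v μs ≤ Fobj B v ν)
    (lo hi : ℝ) (hlohi : lo ≤ hi) (hbox : ∀ j, lo ≤ μs j ∧ μs j ≤ hi)
    (δ η : ℝ) (hδ : 0 < δ) (hη : 0 < η)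
    (hcond : 2 * δ * Real.log (m + 1) * (∑ i, B i) ≤ Real.exp (lo - η) * η ^ 2)
    (μ : Fin m → ℝ) (hμ : ∀ j, lo - η ≤ μ j ∧ μ j ≤ hi + η) :
    Fd B v δ μ - (⨅ ν : Fin m → ℝ, Fd B v δ ν) ≤
      enorm2 (gradFd B v δ μ) ^ 2 / (2 * Real.exp (lo - η)) := by
  set L : ℝ := lo - η with hL
  set E : ℝ := Real.exp L with hE
  set g : Fin m → ℝ := gradFd B v δ μ with hg
  have hEpos : 0 < E := Real.exp_pos _
  have hμL : ∀ j, L ≤ μ j := fun j => (hμ j).1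
  have hμsL : ∀ j, L ≤ μs j := fun j => le_trans (by linarith) (hbox j).1
  -- the key pointwise lower bound on Fd
  have hmain : ∀ ν : Fin m → ℝ, Fd B v δ μ - (∑ j, g j ^ 2) / (2 * E) ≤ Fd B v δ ν := by
    intro ν
    by_cases hcase : ∀ j, L ≤ ν j
    · have hstar := star_ineq hv hB hδ L μ ν hμL hcase
      have hq := quad_bound hEpos g (fun j => ν j - μ j)
      rw [neg_div] at hq
      linarith
    · push_neg at hcase
      obtain ⟨j0, hj0⟩ := hcase
      set T : Finset (Fin m) := Finset.univ.filter (fun k => ν k < L) with hT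
      have hj0T : j0 ∈ T := by
        rw [hT, Finset.mem_filter]
        exact ⟨Finset.mem_univ _, hj0⟩
      have hTne : T.Nonempty := ⟨j0, hj0T⟩
      have hTfact : ∀ k ∈ T, ν k < L ∧ 0 < μs k - ν k ∧ η ≤ μs k - L := by
        intro k hk
        rw [hT, Finset.mem_filter] at hk
        refine ⟨hk.2, by linarith [hμsL k, hk.2], by linarith [(hbox k).1]⟩
      set t0 : ℝ := T.inf' hTne (fun k => (μs k - L) / (μs k - ν k)) with ht0
      have ht0pos : 0 < t0 := by
        rw [ht0, Finset.lt_inf'_iff]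
        intro k hk
        obtain ⟨h1, h2, h3⟩ := hTfact k hk
        exact div_pos (by linarith) h2
      have ht0lt1 : t0 < 1 := by
        rw [ht0, Finset.inf'_lt_iff]
        refine ⟨j0, hj0T, ?_⟩
        obtain ⟨h1, h2, h3⟩ := hTfact j0 hj0T
        rw [div_lt_one h2]
        linarith
      set σ : Fin m → ℝ := fun j => (1 - t0) * μs j + t0 * ν j with hσ
      have hσL : ∀ j, L ≤ σ j := by
        intro j
        by_cases hj : j ∈ T
        · obtain ⟨h1, h2, h3⟩ := hTfact j hj
          have hle : t0 ≤ (μs j - L) / (μs j - ν j) :=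
            Finset.inf'_le _ hj
          have h4 : t0 * (μs j - ν j) ≤ ((μs j - L) / (μs j - ν j)) * (μs j - ν j) :=
            mul_le_mul_of_nonneg_right hle h2.le
          rw [div_mul_cancel₀ _ h2.ne'] at h4
          rw [hσ]
          dsimp only
          nlinarith
        · have hj' : L ≤ ν j := by
            by_contra hc
            exact hj (by rw [hT, Finset.mem_filter]; exact ⟨Finset.mem_univ _, by linarith⟩)
          have := hμsL j
          rw [hσ]
          dsimp only
          nlinarith
      -- the coordinate where σ hits L
      obtain ⟨k0, hk0T, hk0⟩ := Finset.exists_mem_eq_inf' hTne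
        (fun k => (μs k - L) / (μs k - ν k))
      have hσk0 : σ k0 = L := by
        obtain ⟨h1, h2, h3⟩ := hTfact k0 hk0T
        have : t0 = (μs k0 - L) / (μs k0 - ν k0) := hk0
        rw [hσ]
        dsimp only
        rw [this]
        field_simp
        ring
      have hDlb : η ^ 2 ≤ ∑ j, (μs j - σ j) ^ 2 := by
        have h1 : η ^ 2 ≤ (μs k0 - σ k0) ^ 2 := by
          obtain ⟨_, _, h3⟩ := hTfact k0 hk0T
          rw [hσk0]
          nlinarith
        refine le_trans h1 (Finset.single_le_sum (f := fun j => (μs j - σ j) ^ 2)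
          (fun j _ => sq_nonneg _) (Finset.mem_univ k0))
      -- growth of Fobj
      have hgrow := fobj_growth hv hB L μs hμs hμsL σ hσL
      -- Fobj σ ≤ Fobj ν
      have hσν : Fobj B v σ ≤ Fobj B v ν := by
        have h1 := fobj_combo hv hB ht0pos.le ht0lt1.le μs ν
        have h2 := hμs (fun j => (1 - t0) * μs j + t0 * ν j)
        have h3 : Fobj B v σ = Fobj B v (fun j => (1 - t0) * μs j + t0 * ν j) := rfl
        rw [h3]
        have h4 : t0 * Fobj B v (fun j => (1 - t0) * μs j + t0 * ν j) ≤ t0 * Fobj B v ν := by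
          nlinarith [h1, h2]
        exact le_of_mul_le_mul_left h4 ht0pos
      -- gap bounds
      have hgap1 := fobj_le_fd hv hB hδ ν
      have hgap2 := fd_le_fobj_gap hv hB hδ μs
      -- star at μs
      have hstar := star_ineq hv hB hδ L μ μs hμL hμsL
      have hq := quad_bound hEpos g (fun j => μs j - μ j)
      rw [neg_div] at hq
      have hcond' : δ * Real.log (m + 1) * (∑ i, B i) ≤ E * η ^ 2 / 2 := by
        rw [hE, hL]
        linarith
      have hEeta : E * η ^ 2 / 2 ≤ E / 2 * ∑ j, (μs j - σ j) ^ 2 := by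
        have := mul_le_mul_of_nonneg_left hDlb (by positivity : (0:ℝ) ≤ E / 2)
        linarith
      linarith
  have hinf : Fd B v δ μ - (∑ j, g j ^ 2) / (2 * E) ≤ ⨅ ν : Fin m → ℝ, Fd B v δ ν :=
    le_ciInf hmain
  have henorm : enorm2 g ^ 2 = ∑ j, g j ^ 2 :=
    Real.sq_sqrt (Finset.sum_nonneg fun j _ => sq_nonneg _)
  rw [hg] at henorm
  rw [henorm]
  linarith
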